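/- Let T̃_m denote the number of typed search walks of length m. Then T̃_M = o(4^M) as M → ∞; that is, the quotient T̃_M / 4^M tends to 0 as M tends to infinity. -/

import Mathlib

/-- A search walk: a finite sequence of nonzero integers each at most `1`,
all of whose partial sums are at least `1`, and whose total sum is `1`. -/
def IsSearchWalk (D : List ℤ) : Prop :=
  (∀ d ∈ D, d ≠ 0 ∧ d ≤ 1) ∧
  (∀ k, 1 ≤ k → k ≤ D.length → 1 ≤ (D.take k).sum) ∧
  D.sum = 1

/-- `Tt m` is the number of typed search walks of length `m`: pairs of a search
walk `D` of length `m` together with an assignment of a label in `{1,2,3,4}`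
(here modelled as `Fin 4`) to each entry of `D` that is at most `-2` (the
assignment is recorded as the list of labels of those entries in order). -/
noncomputable def Tt (m : ℕ) : ℕ :=
  Nat.card {p : List ℤ × List (Fin 4) //
    p.1.length = m ∧ IsSearchWalk p.1 ∧
    p.2.length = (p.1.filter fun d => decide (d ≤ -2)).length}

/-- Alphabet: `inl b` encodes a step `+1` (b = true) or `-1` (b = false);
`inr (k, t)` encodes a step `-(k+2)` with label `t`. -/
abbrev WalkAlpha (n : ℕ) := Bool ⊕ (Fin (n + 2) × Fin 4)

def wdelta {n : ℕ} : WalkAlpha n → ℤ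
  | Sum.inl b => if b then 1 else -1
  | Sum.inr (k, _) => -(k : ℤ) - 2

def wenc (n : ℕ) : List ℤ → List (Fin 4) → List (WalkAlpha n)
  | [], _ => []
  | d :: D, L =>
    if d ≤ -2 then
      Sum.inr (⟨min ((-d - 2).toNat) (n + 1), by omega⟩, L.headI) :: wenc n D L.tail
    else
      Sum.inl (decide (d = 1)) :: wenc n D L

def wdec {n : ℕ} : List (WalkAlpha n) → List ℤ × List (Fin 4)
  | [] => ([], [])
  | Sum.inl b :: l => ((if b then 1 else -1) :: (wdec l).1, (wdec l).2)
  | Sum.inr (k, t) :: l => ((-(k : ℤ) - 2) :: (wdec l).1, t :: (wdec l).2)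

lemma wenc_length (n : ℕ) : ∀ (D : List ℤ) (L : List (Fin 4)),
    (wenc n D L).length = D.length := by
  intro D
  induction D with
  | nil => intro L; simp [wenc]
  | cons d D ih =>
    intro L
    by_cases h : d ≤ -2 <;> simp [wenc, h, ih]

lemma wdec_wenc (n : ℕ) : ∀ (D : List ℤ) (L : List (Fin 4)),
    (∀ d ∈ D, d ≠ 0 ∧ d ≤ 1 ∧ 2 - (n : ℤ) ≤ d) →
    L.length = (D.filter fun d => decide (d ≤ -2)).length →
    wdec (wenc n D L) = (D, L) := by
  intro D
  induction D with
  | nil =>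
    intro L _ hL
    simp [List.filter] at hL
    simp [wenc, wdec, hL]
  | cons d D ih =>
    intro L hmem hL
    by_cases h : d ≤ -2
    · have hd := hmem d (by simp)
      have hL' : L.length = (D.filter fun d => decide (d ≤ -2)).length + 1 := by
        rw [hL, List.filter_cons]
        simp [h]
      obtain ⟨t, L', rfl⟩ : ∃ t L', L = t :: L' := by
        cases L with
        | nil => simp at hL'
        | cons a l => exact ⟨a, l, rfl⟩
      have hmin : min ((-d - 2).toNat) (n + 1) = (-d - 2).toNat := by omega
      have hrec := ih L' (fun x hx => hmem x (by simp [hx])) (by simpa using hL')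
      simp only [wenc, if_pos h, List.headI, List.tail, wdec, hrec, hmin]
      have : (-(((-d - 2).toNat : ℤ)) - 2) = d := by omega
      rw [this]
    · have hd := hmem d (by simp)
      have hL' : L.length = (D.filter fun d => decide (d ≤ -2)).length := by
        rw [hL, List.filter_cons]; simp [h]
      have hrec := ih L (fun x hx => hmem x (by simp [hx])) hL'
      have hd1 : d = 1 ∨ d = -1 := by omega
      simp only [wenc, if_neg h]
      rcases hd1 with rfl | rfl <;> simp [wdec, hrec]

lemma wdelta_wenc (n : ℕ) : ∀ (D : List ℤ) (L : List (Fin 4)),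
    (∀ d ∈ D, d ≠ 0 ∧ d ≤ 1 ∧ 2 - (n : ℤ) ≤ d) →
    (wenc n D L).map wdelta = D := by
  intro D
  induction D with
  | nil => intro L _; simp [wenc]
  | cons d D ih =>
    intro L hmem
    have hd := hmem d (by simp)
    have hrec : ∀ L', (wenc n D L').map wdelta = D :=
      fun L' => ih L' (fun x hx => hmem x (by simp [hx]))
    by_cases h : d ≤ -2
    · have hmin : min ((-d - 2).toNat) (n + 1) = (-d - 2).toNat := by omega
      simp only [wenc, if_pos h, List.map_cons, hrec, hmin, wdelta]
      have : (-(((-d - 2).toNat : ℤ)) - 2) = d := by omega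
      rw [this]
    · have hd1 : d = 1 ∨ d = -1 := by omega
      simp only [wenc, if_neg h, List.map_cons, hrec]
      rcases hd1 with rfl | rfl <;> simp [wdelta]

lemma zpow_finset_sum {ι : Type*} (u : ℝ) (hu : u ≠ 0) (s : Finset ι) (f : ι → ℤ) :
    u ^ (∑ i ∈ s, f i) = ∏ i ∈ s, u ^ f i := by
  classical
  induction s using Finset.induction with
  | empty => simp
  | insert _ _ h ih => rw [Finset.sum_insert h, Finset.prod_insert h, zpow_add₀ hu, ih]

lemma sum_w_le (m : ℕ) :
    ∑ e : WalkAlpha m, ((8/3 : ℝ) ^ (wdelta e)) ≤ 473/120 := by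
  rw [Fintype.sum_sum_type]
  have h1 : ∑ b : Bool, ((8/3 : ℝ) ^ (wdelta (Sum.inl b : WalkAlpha m)))
      = 8/3 + 3/8 := by
    rw [Fintype.sum_bool]
    simp [wdelta]
  have h2 : ∑ p : Fin (m + 2) × Fin 4, ((8/3 : ℝ) ^ (wdelta (Sum.inr p : WalkAlpha m)))
      ≤ 9/10 := by
    rw [Fintype.sum_prod_type]
    have key : ∀ k : Fin (m + 2),
        ∑ _t : Fin 4, ((8/3 : ℝ) ^ (wdelta (Sum.inr (k, _t) : WalkAlpha m)))
        = 4 * ((9/64) * (3/8 : ℝ) ^ (k : ℕ)) := by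
      intro k
      simp only [wdelta]
      rw [Finset.sum_const]
      simp only [Finset.card_univ, Fintype.card_fin, nsmul_eq_mul]
      have : ((8/3 : ℝ)) ^ (-(k : ℤ) - 2) = (9/64) * (3/8 : ℝ) ^ (k : ℕ) := by
        rw [show (-(k : ℤ) - 2) = -(((k : ℕ) + 2 : ℕ) : ℤ) by push_cast; ring,
          zpow_neg, zpow_natCast, ← inv_pow]
        norm_num [pow_add]
        ring
      rw [this]
      norm_num
    rw [Finset.sum_congr rfl (fun k _ => key k), ← Finset.mul_sum, ← Finset.mul_sum]
    have hgeom : ∑ k : Fin (m + 2), (3/8 : ℝ) ^ (k : ℕ) ≤ 8/5 := by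
      rw [Fin.sum_univ_eq_sum_range]
      rw [geom_sum_eq (by norm_num) (m + 2)]
      have hp : (0:ℝ) ≤ (3/8 : ℝ) ^ (m + 2) := by positivity
      have hp1 : (3/8 : ℝ) ^ (m + 2) ≤ 1 := pow_le_one₀ (by norm_num) (by norm_num)
      rw [div_le_iff_of_neg (by norm_num)]
      nlinarith
    calc 4 * ((9:ℝ)/64 * ∑ k : Fin (m + 2), (3/8 : ℝ) ^ (k : ℕ))
        ≤ 4 * ((9:ℝ)/64 * (8/5)) := by linarith
      _ = 9/10 := by norm_num
  linarith

lemma card_S_le (m : ℕ) :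
    (Nat.card {f : Fin m → WalkAlpha m // ∑ i, wdelta (f i) = 1} : ℝ)
      ≤ (3/8) * (473/120)^m := by
  classical
  rw [Nat.card_eq_fintype_card, Fintype.card_subtype]
  calc ((Finset.univ.filter fun f : Fin m → WalkAlpha m => ∑ i, wdelta (f i) = 1).card : ℝ)
      = ∑ _f ∈ (Finset.univ.filter fun f : Fin m → WalkAlpha m => ∑ i, wdelta (f i) = 1),
          (1:ℝ) := by rw [Finset.sum_const, nsmul_eq_mul, mul_one]
    _ = ∑ f ∈ (Finset.univ.filter fun f : Fin m → WalkAlpha m => ∑ i, wdelta (f i) = 1),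
          (3/8) * ∏ i, (8/3 : ℝ) ^ (wdelta (f i)) := by
        refine Finset.sum_congr rfl (fun f hf => ?_)
        rw [← zpow_finset_sum (8/3 : ℝ) (by norm_num), (Finset.mem_filter.mp hf).2, zpow_one]
        norm_num
    _ ≤ ∑ f : Fin m → WalkAlpha m, (3/8) * ∏ i, (8/3 : ℝ) ^ (wdelta (f i)) := by
        refine Finset.sum_le_sum_of_subset_of_nonneg (Finset.filter_subset _ _)
          (fun f _ _ => ?_)
        positivity
    _ = (3/8) * ∑ f : Fin m → WalkAlpha m, ∏ i, (8/3 : ℝ) ^ (wdelta (f i)) := by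
        rw [Finset.mul_sum]
    _ = (3/8) * ∏ _i : Fin m, ∑ e : WalkAlpha m, (8/3 : ℝ) ^ (wdelta e) := by
        rw [Finset.prod_univ_sum (fun _ => Finset.univ) (fun _ e => (8/3 : ℝ) ^ (wdelta e)),
          Fintype.piFinset_univ]
    _ = (3/8) * (∑ e : WalkAlpha m, (8/3 : ℝ) ^ (wdelta e))^m := by
        rw [Finset.prod_const, Finset.card_univ, Fintype.card_fin]
    _ ≤ (3/8) * (473/120)^m := by
        refine mul_le_mul_of_nonneg_left (pow_le_pow_left₀ ?_ (sum_w_le m) m) (by norm_num)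
        positivity

lemma list_sum_le_length : ∀ l : List ℤ, (∀ x ∈ l, x ≤ 1) → l.sum ≤ (l.length : ℤ) := by
  intro l
  induction l with
  | nil => simp
  | cons a l ih =>
    intro h
    have h1 := h a (by simp)
    have h2 := ih (fun x hx => h x (by simp [hx]))
    simp only [List.sum_cons, List.length_cons]
    push_cast
    omega

lemma walk_cond (D : List ℤ) (h : IsSearchWalk D) :
    ∀ d ∈ D, d ≠ 0 ∧ d ≤ 1 ∧ 2 - (D.length : ℤ) ≤ d := by
  intro d hd
  obtain ⟨h1, _, h3⟩ := h
  refine ⟨(h1 d hd).1, (h1 d hd).2, ?_⟩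
  obtain ⟨A, B, rfl⟩ := List.append_of_mem hd
  have hA : A.sum ≤ (A.length : ℤ) :=
    list_sum_le_length A (fun x hx => (h1 x (by simp [hx])).2)
  have hB : B.sum ≤ (B.length : ℤ) :=
    list_sum_le_length B (fun x hx => (h1 x (by simp [hx])).2)
  have hsum : A.sum + (d + B.sum) = 1 := by
    rw [← h3]; simp
  have hlen : (A ++ d :: B).length = A.length + B.length + 1 := by simp; omega
  rw [hlen]
  push_cast
  omega

/-- The encoding injection, as a function between the two subtypes. -/
def encFun (m : ℕ)
    (p : {p : List ℤ × List (Fin 4) //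
      p.1.length = m ∧ IsSearchWalk p.1 ∧
      p.2.length = (p.1.filter fun d => decide (d ≤ -2)).length}) :
    {f : Fin m → WalkAlpha m // ∑ i, wdelta (f i) = 1} := by
  refine ⟨fun i => (wenc m p.1.1 p.1.2).get
    (Fin.cast (by rw [wenc_length, p.2.1]) i), ?_⟩
  have hcond : ∀ d ∈ p.1.1, d ≠ 0 ∧ d ≤ 1 ∧ 2 - (m : ℤ) ≤ d := by
    have := walk_cond p.1.1 p.2.2.1
    rw [p.2.1] at this
    exact this
  set l := wenc m p.1.1 p.1.2 with hl
  have hmap : l.map wdelta = p.1.1 := wdelta_wenc m p.1.1 p.1.2 hcond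
  have h1 : ∑ i : Fin m, wdelta (l.get (Fin.cast (by rw [hl, wenc_length, p.2.1]) i))
      = ∑ j : Fin l.length, wdelta (l.get j) :=
    Fin.sum_congr' (fun j => wdelta (l.get j)) (by rw [hl, wenc_length, p.2.1])
  have h2 : (l.map wdelta).sum = ∑ j : Fin l.length, wdelta (l.get j) := by
    conv_lhs => rw [← List.ofFn_get l]
    rw [List.map_ofFn, List.sum_ofFn]
    rfl
  rw [h1, ← h2, hmap]
  exact p.2.2.1.2.2

lemma encFun_injective (m : ℕ) : Function.Injective (encFun m) := by
  intro p q h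
  have hle : ∀ (r : {p : List ℤ × List (Fin 4) //
      p.1.length = m ∧ IsSearchWalk p.1 ∧
      p.2.length = (p.1.filter fun d => decide (d ≤ -2)).length}),
      (wenc m r.1.1 r.1.2).length = m := fun r => by rw [wenc_length, r.2.1]
  have hfun := congrArg Subtype.val h
  have hlist : wenc m p.1.1 p.1.2 = wenc m q.1.1 q.1.2 := by
    apply List.ext_get (by rw [hle p, hle q])
    intro n h₁ h₂
    have hn : n < m := by rw [← hle p]; exact h₁
    have := congrFun hfun ⟨n, hn⟩
    simpa [Fin.cast, encFun] using this
  have hcondp : ∀ d ∈ p.1.1, d ≠ 0 ∧ d ≤ 1 ∧ 2 - (m : ℤ) ≤ d := by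
    have := walk_cond p.1.1 p.2.2.1; rw [p.2.1] at this; exact this
  have hcondq : ∀ d ∈ q.1.1, d ≠ 0 ∧ d ≤ 1 ∧ 2 - (m : ℤ) ≤ d := by
    have := walk_cond q.1.1 q.2.2.1; rw [q.2.1] at this; exact this
  have hp := wdec_wenc m p.1.1 p.1.2 hcondp p.2.2.2
  have hq := wdec_wenc m q.1.1 q.1.2 hcondq q.2.2.2
  have : ((p:List ℤ × List (Fin 4)).1, (p:List ℤ × List (Fin 4)).2)
      = ((q:List ℤ × List (Fin 4)).1, (q:List ℤ × List (Fin 4)).2) := by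
    rw [← hp, ← hq, hlist]
  exact Subtype.ext (by simpa using this)

/-- `Tt M = o(4^M)` as `M → ∞`: the quotient `Tt M / 4^M` tends to `0`. -/
theorem typedSearchWalk_count_little_o :
    Filter.Tendsto (fun M : ℕ => (Tt M : ℝ) / (4 : ℝ) ^ M)
      Filter.atTop (nhds 0) := by
  have hTt : ∀ m : ℕ, (Tt m : ℝ) ≤ (3/8) * (473/120)^m := by
    intro m
    have h1 : Tt m ≤ Nat.card {f : Fin m → WalkAlpha m // ∑ i, wdelta (f i) = 1} :=
      Nat.card_le_card_of_injective (encFun m) (encFun_injective m)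
    calc (Tt m : ℝ) ≤ (Nat.card {f : Fin m → WalkAlpha m // ∑ i, wdelta (f i) = 1} : ℝ) := by
          exact_mod_cast h1
      _ ≤ (3/8) * (473/120)^m := card_S_le m
  have hub : ∀ m : ℕ, (Tt m : ℝ) / (4:ℝ)^m ≤ (3/8) * (473/480)^m := by
    intro m
    have h4 : (0:ℝ) < (4:ℝ)^m := by positivity
    rw [div_le_iff₀ h4]
    calc (Tt m : ℝ) ≤ (3/8) * (473/120)^m := hTt m
      _ = (3/8) * (473/480)^m * 4^m := by
          rw [mul_assoc, ← mul_pow]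
          norm_num
  have hlb : ∀ m : ℕ, 0 ≤ (Tt m : ℝ) / (4:ℝ)^m := by
    intro m; positivity
  have htend : Filter.Tendsto (fun m : ℕ => (3/8 : ℝ) * (473/480)^m) Filter.atTop (nhds 0) := by
    have := (tendsto_pow_atTop_nhds_zero_of_lt_one
      (by norm_num : (0:ℝ) ≤ 473/480) (by norm_num : (473/480:ℝ) < 1)).const_mul (3/8 : ℝ)
    simpa using this
  exact squeeze_zero hlb hub htend
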